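/- If a Laurent polynomial of the form f = a₀ + a₋₁·X⁻¹ (with a₀, a₋₁ ∈ K and a₋₁ ≠ 0) satisfies equation (★), then a₀ = b and either a₋₁ = u or a₋₁ = −v. -/

import Mathlib

open LaurentPolynomial

/-- Equation (★): `(X² − 1)·f·f∨ = b·(X²·f∨ − f) − c·(X·f − X·f∨) + Q·(X² − 1)`,
where `Q = u·v`, `c = u − v`, `b = Q − 1` and `f∨` is the image of `f` under the
`K`-algebra involution of `K[X,X⁻¹]` sending `X` to `X⁻¹`. -/
def SatStar {K : Type*} [Field K] (u v : K) (f : K[T;T⁻¹]) : Prop :=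
  (T 2 - 1) * (f * invert f) =
    C (u * v - 1) * (T 2 * invert f - f)
      - C (u - v) * (T 1 * f - T 1 * invert f)
      + C (u * v) * (T 2 - 1)

private lemma laur_add_apply {K : Type*} [Field K] (f g : K[T;T⁻¹]) (n : ℤ) :
    AddMonoidAlgebra.coeff (f + g) n = AddMonoidAlgebra.coeff f n + AddMonoidAlgebra.coeff g n := rfl

private lemma laur_sub_apply {K : Type*} [Field K] (f g : K[T;T⁻¹]) (n : ℤ) :
    AddMonoidAlgebra.coeff (f - g) n = AddMonoidAlgebra.coeff f n - AddMonoidAlgebra.coeff g n := rfl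

private lemma laur_single_apply {K : Type*} [Field K] (a : K) (m n : ℤ) :
    AddMonoidAlgebra.coeff (AddMonoidAlgebra.single m a : K[T;T⁻¹]) n = if m = n then a else 0 :=
  Finsupp.single_apply

/-- A solution of (★) of the form `a₀ + a₋₁·X⁻¹` with `a₋₁ ≠ 0` has `a₀ = b`,
and `a₋₁ = u` or `a₋₁ = −v`. -/
theorem statement4 {K : Type*} [Field K] (u v : K) (a₀ aneg : K) (ha : aneg ≠ 0)
    (hf : SatStar u v (C a₀ + C aneg * T (-1))) :
    a₀ = u * v - 1 ∧ (aneg = u ∨ aneg = -v) := by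
  unfold SatStar at hf
  simp only [map_add, map_mul, invert_C, invert_T, neg_neg] at hf
  rw [show (1:K[T;T⁻¹]) = T 0 from T_zero.symm] at hf
  simp only [T, ← single_eq_C, sub_mul, mul_sub, add_mul, mul_add,
    AddMonoidAlgebra.single_mul_single, one_mul, mul_one] at hf
  have h3 := congrArg (fun p : K[T;T⁻¹] => AddMonoidAlgebra.coeff p 3) hf
  have h2 := congrArg (fun p : K[T;T⁻¹] => AddMonoidAlgebra.coeff p 2) hf
  simp only [laur_add_apply, laur_sub_apply, laur_single_apply] at h3 h2
  norm_num at h3 h2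
  have ha0 : a₀ = u * v - 1 := by
    have := mul_right_cancel₀ ha (show a₀ * aneg = (u * v - 1) * aneg by
      linear_combination h3)
    exact this
  subst ha0
  refine ⟨rfl, ?_⟩
  have hq : (aneg - u) * (aneg + v) = 0 := by linear_combination h2
  rcases mul_eq_zero.mp hq with h | h
  · left; linear_combination h
  · right; linear_combination h
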